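/- Let Ḡ be an orientation of a finite undirected simple graph G=(V,E) satisfying Invariant 1, let {u,v} ∈ E be oriented from u to v in Ḡ, let G̃ be the orientation of G − {u,v} obtained from Ḡ by removing the directed edge (u,v), let P be an improving path in G̃ ending at u, let Ḡ' be the orientation obtained from G̃ by flipping P, and let P_f be the inverse (flipped) path of P in Ḡ'. Then every improving path in Ḡ' shares at least one vertex with P_f. -/

import Mathlib

open Finset

/-- An orientation of a simple graph `G`: a choice, for each edge `{u,v}` of `G`,
of exactly one of the directed edges `(u,v)`, `(v,u)`. -/
structure GraphOrientation {V : Type*} (G : SimpleGraph V) where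
  dir : V → V → Bool
  dir_adj : ∀ u v, dir u v = true → G.Adj u v
  exactly_one : ∀ u v, G.Adj u v → (dir u v = true ↔ ¬ dir v u = true)

/-- Out-degree of `v` w.r.t. a directed-edge relation `d`. -/
def outDegF {V : Type*} [Fintype V] (d : V → V → Bool) (v : V) : ℕ :=
  (Finset.univ.filter fun w => d v w = true).card

/-- Out-degree of a vertex in an orientation. -/
def GraphOrientation.outDeg {V : Type*} [Fintype V] {G : SimpleGraph V}
    (o : GraphOrientation G) (v : V) : ℕ := outDegF o.dir v

/-- Maximum out-degree `Δ` of an orientation. -/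
def GraphOrientation.maxOutDeg {V : Type*} [Fintype V] {G : SimpleGraph V}
    (o : GraphOrientation G) : ℕ := Finset.univ.sup o.outDeg

/-- `|E(S)|`: the number of edges of `G` with both endpoints in `S`. -/
def edgeCount {V : Type*} [Fintype V] [DecidableEq V] (G : SimpleGraph V)
    [DecidableRel G.Adj] (S : Finset V) : ℕ :=
  (G.edgeFinset.filter fun e => ∀ x ∈ e, x ∈ S).card

/-- A directed path in an orientation: a list of distinct vertices, of length at
least two (i.e. `k ≥ 1` edges), with consecutive vertices joined by directed edges. -/
def IsDirPath {V : Type*} {G : SimpleGraph V} (o : GraphOrientation G) (p : List V) : Prop :=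
  p.Nodup ∧ 2 ≤ p.length ∧ List.Chain' (fun a b => o.dir a b = true) p

/-- A directed path from `a` to `b`. -/
def IsPathFrom {V : Type*} {G : SimpleGraph V} (o : GraphOrientation G)
    (p : List V) (a b : V) : Prop :=
  IsDirPath o p ∧ p.head? = some a ∧ p.getLast? = some b

/-- Invariant 1: there is no improving path between any two vertices, i.e. no directed
path `⟨a,…,b⟩` with `odeg(a) > odeg(b) + 1`. -/
def Invariant1 {V : Type*} [Fintype V] {G : SimpleGraph V} (o : GraphOrientation G) : Prop :=
  ∀ p a b, IsPathFrom o p a b → o.outDeg a ≤ o.outDeg b + 1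

/-- Invariant 2: there is no improving path starting at a vertex of maximum out-degree. -/
def Invariant2 {V : Type*} [Fintype V] {G : SimpleGraph V} (o : GraphOrientation G) : Prop :=
  ∀ p a b, IsPathFrom o p a b → o.outDeg a = o.maxOutDeg → o.outDeg a ≤ o.outDeg b + 1

/-- Flipping the directed path `p`: every directed edge `(v_i, v_{i+1})` of `p`
is replaced by the reversed edge `(v_{i+1}, v_i)`; all other edges are unchanged. -/
def flipDir {V : Type*} [DecidableEq V] (d : V → V → Bool) (p : List V) : V → V → Bool :=
  fun a b => if (a, b) ∈ p.zip p.tail ∨ (b, a) ∈ p.zip p.tail then d b a else d a b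

/-- `G + {u,v}`: the graph obtained from `G` by inserting the edge `{u,v}`. -/
def addE {V : Type*} (G : SimpleGraph V) (u v : V) : SimpleGraph V :=
  G ⊔ SimpleGraph.fromEdgeSet {s(u, v)}

/-- `G − {u,v}`: the graph obtained from `G` by deleting the edge `{u,v}`. -/
def delE {V : Type*} (G : SimpleGraph V) (u v : V) : SimpleGraph V :=
  G.deleteEdges {s(u, v)}


private lemma chain'_mono_mem {α : Type*} {R S : α → α → Prop}
    (l : List α) (h : ∀ a ∈ l, ∀ b ∈ l, R a b → S a b) (hc : l.Chain' R) : l.Chain' S := by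
  induction l with
  | nil => exact List.isChain_nil
  | cons a t ih =>
    cases t with
    | nil => exact List.isChain_singleton _
    | cons b t' =>
      rw [List.Chain', List.isChain_cons_cons] at hc ⊢
      exact ⟨h a (by simp) b (by simp) hc.1,
        ih (fun x hx y hy => h x (by simp [hx]) y (by simp [hy])) hc.2⟩

/-- After deleting the edge `{u,v}` (oriented from `u` to `v`) from an
Invariant-1 orientation and flipping an improving path `P` ending at `u`, every
improving path in the resulting orientation `Ḡ'` shares at least one vertex with the
inverse path `P_f` (the reversal of `P`). -/
theorem delete_flip_shares_vertex {V : Type*} [Fintype V] [DecidableEq V]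
    {G : SimpleGraph V} (o : GraphOrientation G) (hinv : Invariant1 o)
    (u v : V) (hdir : o.dir u v = true)
    (ot : GraphOrientation (delE G u v))
    (hot : ∀ a b, ot.dir a b = true ↔ (o.dir a b = true ∧ ¬ (a = u ∧ b = v)))
    (P : List V) (w : V) (hP : IsPathFrom ot P w u)
    (himp : ot.outDeg u + 1 < ot.outDeg w)
    (o' : GraphOrientation (delE G u v)) (ho' : o'.dir = flipDir ot.dir P) :
    ∀ q x y, IsPathFrom o' q x y → o'.outDeg y + 1 < o'.outDeg x →
      ∃ z, z ∈ q ∧ z ∈ P.reverse := by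
  intro q x y hq himpq
  by_contra hcon
  push_neg at hcon
  have hnotP : ∀ z ∈ q, z ∉ P := by
    intro z hz hzP; exact hcon z hz (List.mem_reverse.mpr hzP)
  have huP : u ∈ P := by
    have h := hP.2.2
    have : P ≠ [] := by intro h'; rw [h'] at h; simp at h
    rw [List.getLast?_eq_getLast this] at h
    rw [Option.some_inj] at h
    rw [← h]; exact List.getLast_mem this
  have hdirEq : ∀ a, a ∉ P → o'.dir a = ot.dir a := by
    intro a ha
    funext b
    rw [ho']
    unfold flipDir
    rw [if_neg]
    rintro (h | h)
    · exact ha (List.of_mem_zip h).1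
    · exact ha (List.mem_of_mem_tail (List.of_mem_zip h).2)
  have hout' : ∀ a, a ∉ P → o'.outDeg a = ot.outDeg a := by
    intro a ha
    unfold GraphOrientation.outDeg outDegF
    rw [hdirEq a ha]
  have houtot : ∀ a, a ≠ u → ot.outDeg a = o.outDeg a := by
    intro a ha
    unfold GraphOrientation.outDeg outDegF
    congr 1
    apply Finset.filter_congr
    intro b _
    simp [hot, ha]
  have hx : x ∈ q := by
    have h := hq.2.1
    cases q with
    | nil => simp at h
    | cons c t => simp at h; simp [h]
  have hy : y ∈ q := by
    have h := hq.2.2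
    have hne : q ≠ [] := by intro h'; rw [h'] at h; simp at h
    rw [List.getLast?_eq_getLast hne] at h
    rw [Option.some_inj] at h
    rw [← h]; exact List.getLast_mem hne
  have hxP := hnotP x hx
  have hyP := hnotP y hy
  have hxu : x ≠ u := fun h => hxP (h ▸ huP)
  have hyu : y ≠ u := fun h => hyP (h ▸ huP)
  have hchain : List.Chain' (fun a b => o.dir a b = true) q := by
    refine chain'_mono_mem q ?_ hq.1.2.2
    intro a ha b hb hab
    have h1 : ot.dir a b = true := by
      rw [← congrFun (hdirEq a (hnotP a ha)) b]; exact hab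
    exact ((hot a b).mp h1).1
  have hpath : IsPathFrom o q x y :=
    ⟨⟨hq.1.1, hq.1.2.1, hchain⟩, hq.2.1, hq.2.2⟩
  have hle := hinv q x y hpath
  rw [hout' x hxP, hout' y hyP, houtot x hxu, houtot y hyu] at himpq
  omega
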